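/- Let m-1 \leq \alpha < m and f \in C^m[0,1]. Then the left Caputo fractional derivatives of the Bernstein polynomials of f converge uniformly on [0,1] to the left Caputo fractional derivative of f: \sup_{x\in[0,1]} |{}^C_0D_x^\alpha B_n(f;x) - {}^C_0D_x^\alpha f(x)| \to 0 as n \to \infty. -/

import Mathlib

/-- The `n`-th Bernstein polynomial of `f`. -/
noncomputable def bern (n : ℕ) (f : ℝ → ℝ) (x : ℝ) : ℝ :=
  ∑ i ∈ Finset.range (n + 1),
    (n.choose i : ℝ) * f ((i : ℝ) / n) * x ^ i * (1 - x) ^ (n - i)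

/-- The left Caputo fractional derivative of order `α` (with `m - 1 ≤ α < m`)
based at `0` (derivatives taken within `[0,1]`). -/
noncomputable def caputo (m : ℕ) (α : ℝ) (f : ℝ → ℝ) (x : ℝ) : ℝ :=
  (1 / Real.Gamma ((m : ℝ) - α)) *
    ∫ τ in (0 : ℝ)..x, (x - τ) ^ ((m : ℝ) - α - 1) * iteratedDerivWithin m f (Set.Icc 0 1) τ

open Finset Set

noncomputable def Bg (n : ℕ) (g : ℕ → ℝ) (x : ℝ) : ℝ :=
  ∑ i ∈ Finset.range (n + 1), (n.choose i : ℝ) * g i * x ^ i * (1 - x) ^ (n - i)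

def fdiff : ℕ → (ℕ → ℝ) → ℕ → ℝ
  | 0, g => g
  | k + 1, g => fun i => fdiff k g (i + 1) - fdiff k g i

lemma choose_id (n j : ℕ) (hn : 1 ≤ n) :
    (n.choose (j+1) : ℝ) * (j+1) = (n : ℝ) * ((n-1).choose j) := by
  have := Nat.add_one_mul_choose_eq (n-1) j
  rw [Nat.sub_add_cancel hn] at this
  exact_mod_cast this.symm

lemma choose_id2 (n i : ℕ) (hn : 1 ≤ n) :
    (n.choose i : ℝ) * ((n - i : ℕ) : ℝ) = (n : ℝ) * ((n-1).choose i) := by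
  have h1 := Nat.choose_succ_right_eq n i
  have : (n.choose (i+1) : ℝ) * (i+1) = (n.choose i : ℝ) * ((n - i : ℕ):ℝ) := by
    exact_mod_cast congrArg (Nat.cast : ℕ → ℝ) h1
  rw [← this, choose_id n i hn]

lemma bg_deriv_identity (n : ℕ) (hn : 1 ≤ n) (g : ℕ → ℝ) (x : ℝ) :
    (n : ℝ) * Bg (n - 1) (fdiff 1 g) x =
    ∑ i ∈ Finset.range (n + 1), (n.choose i : ℝ) * g i *
      ((i : ℝ) * x ^ (i - 1) * (1 - x) ^ (n - i)
        - ((n - i : ℕ) : ℝ) * x ^ i * (1 - x) ^ (n - i - 1)) := by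
  have hsplit : ∀ i ∈ Finset.range (n+1), (n.choose i : ℝ) * g i *
      ((i : ℝ) * x ^ (i - 1) * (1 - x) ^ (n - i)
        - ((n - i : ℕ) : ℝ) * x ^ i * (1 - x) ^ (n - i - 1))
      = ((n.choose i : ℝ) * (i:ℝ) * g i * x ^ (i - 1) * (1 - x) ^ (n - i))
        - ((n.choose i : ℝ) * ((n - i : ℕ) : ℝ) * g i * x ^ i * (1 - x) ^ (n - i - 1)) := by
    intro i _; ring
  rw [Finset.sum_congr rfl hsplit, Finset.sum_sub_distrib]
  have hA : ∑ i ∈ Finset.range (n+1),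
      (n.choose i : ℝ) * (i:ℝ) * g i * x ^ (i - 1) * (1 - x) ^ (n - i)
      = ∑ j ∈ Finset.range n, (n:ℝ) * ((n-1).choose j : ℝ) * g (j+1) * x ^ j * (1 - x) ^ (n-1-j) := by
    rw [Finset.sum_range_succ']
    simp only [Nat.cast_zero, mul_zero, zero_mul, add_zero]
    apply Finset.sum_congr rfl
    intro j _
    have h1 : (n.choose (j+1) : ℝ) * ((j+1 : ℕ):ℝ) = (n : ℝ) * ((n-1).choose j) := by
      have := choose_id n j hn; push_cast at this ⊢; linarith
    have h2 : n - (j+1) = n - 1 - j := by omega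
    have h3 : j + 1 - 1 = j := by omega
    rw [h2, h3]
    push_cast at h1 ⊢
    linear_combination (g (j+1) * x ^ j * (1 - x) ^ (n-1-j)) * h1
  have hB : ∑ i ∈ Finset.range (n+1),
      (n.choose i : ℝ) * ((n - i : ℕ) : ℝ) * g i * x ^ i * (1 - x) ^ (n - i - 1)
      = ∑ j ∈ Finset.range n, (n:ℝ) * ((n-1).choose j : ℝ) * g j * x ^ j * (1 - x) ^ (n-1-j) := by
    rw [Finset.sum_range_succ]
    simp only [Nat.sub_self, Nat.cast_zero, mul_zero, zero_mul, add_zero]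
    apply Finset.sum_congr rfl
    intro j hj
    rw [choose_id2 n j hn]
    have h2 : n - j - 1 = n - 1 - j := by omega
    rw [h2]
  rw [hA, hB, ← Finset.sum_sub_distrib]
  unfold Bg
  rw [Finset.mul_sum]
  rw [Nat.sub_add_cancel hn]
  apply Finset.sum_congr rfl
  intro j _
  show (n:ℝ) * (((n-1).choose j : ℝ) * (fdiff 1 g j) * x ^ j * (1-x)^(n-1-j)) = _
  show _ = (n:ℝ) * ((n-1).choose j : ℝ) * g (j+1) * x ^ j * (1 - x) ^ (n-1-j)
      - (n:ℝ) * ((n-1).choose j : ℝ) * g j * x ^ j * (1 - x) ^ (n-1-j)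
  show (n:ℝ) * (((n-1).choose j : ℝ) * (g (j+1) - g j) * x ^ j * (1-x)^(n-1-j)) = _
  ring

theorem hasDerivAt_Bg (n : ℕ) (hn : 1 ≤ n) (g : ℕ → ℝ) (x : ℝ) :
    HasDerivAt (Bg n g) ((n : ℝ) * Bg (n - 1) (fdiff 1 g) x) x := by
  have H : ∀ i ∈ Finset.range (n + 1), HasDerivAt
      (fun y => (n.choose i : ℝ) * g i * y ^ i * (1 - y) ^ (n - i))
      ((n.choose i : ℝ) * g i * ((i : ℝ) * x ^ (i - 1) * (1 - x) ^ (n - i)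
        - ((n - i : ℕ) : ℝ) * x ^ i * (1 - x) ^ (n - i - 1))) x := by
    intro i _
    have h1 : HasDerivAt (fun y : ℝ => y ^ i) ((i : ℝ) * x ^ (i - 1)) x := hasDerivAt_pow i x
    have h2 : HasDerivAt (fun y : ℝ => (1 - y) ^ (n - i))
        (-(((n - i : ℕ) : ℝ) * (1 - x) ^ (n - i - 1))) x := by
      have hb : HasDerivAt (fun y : ℝ => 1 - y) (-1) x := by
        simpa using (hasDerivAt_id' x).const_sub (1:ℝ)
      have := (hasDerivAt_pow (n - i) (1 - x)).comp x hb
      simpa [Function.comp_def, mul_comm, mul_assoc, mul_left_comm] using this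
    have := ((h1.const_mul ((n.choose i : ℝ) * g i)).mul h2)
    exact this.congr_deriv (by ring)
  have hsum := HasDerivAt.fun_sum H
  exact hsum.congr_deriv (bg_deriv_identity n hn g x).symm

theorem contDiff_Bg (n : ℕ) (g : ℕ → ℝ) : ContDiff ℝ ⊤ (Bg n g) := by
  unfold Bg
  apply ContDiff.sum
  intro i _
  exact ((contDiff_const.mul (contDiff_id.pow i)).mul ((contDiff_const.sub contDiff_id).pow (n - i)))

lemma deriv_Bg (n : ℕ) (hn : 1 ≤ n) (g : ℕ → ℝ) :
    deriv (Bg n g) = fun x => (n : ℝ) * Bg (n - 1) (fdiff 1 g) x := by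
  funext x
  exact (hasDerivAt_Bg n hn g x).deriv

lemma fdiff_succ_comm (k : ℕ) (g : ℕ → ℝ) : fdiff (k+1) g = fdiff k (fdiff 1 g) := by
  induction k with
  | zero => rfl
  | succ k ih =>
    funext i
    show fdiff (k+1) g (i+1) - fdiff (k+1) g i = fdiff (k+1) (fdiff 1 g) i
    rw [ih]
    rfl

theorem iteratedDeriv_Bg (m : ℕ) : ∀ n, m ≤ n → ∀ (g : ℕ → ℝ),
    iteratedDeriv m (Bg n g) = fun x => (n.descFactorial m : ℝ) * Bg (n - m) (fdiff m g) x := by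
  induction m with
  | zero =>
    intro n _ g
    funext x
    simp [iteratedDeriv_zero, fdiff, Nat.descFactorial]
  | succ m ih =>
    intro n hn g
    have hn1 : 1 ≤ n := le_trans (Nat.succ_le_succ (Nat.zero_le m)) hn
    rw [iteratedDeriv_succ', deriv_Bg n hn1 g]
    funext x
    have : iteratedDeriv m (fun x => (n:ℝ) * Bg (n-1) (fdiff 1 g) x) x
        = (n:ℝ) * iteratedDeriv m (Bg (n-1) (fdiff 1 g)) x := by
      rw [← iteratedDerivWithin_univ, ← iteratedDerivWithin_univ]
      exact iteratedDerivWithin_const_mul (Set.mem_univ x) uniqueDiffOn_univ (n:ℝ)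
        ((contDiff_Bg _ _).of_le le_top).contDiffWithinAt
    rw [this, ih (n-1) (by omega) (fdiff 1 g)]
    have h1 : n - 1 - m = n - (m+1) := by omega
    have h2 : (n.descFactorial (m+1) : ℝ) = (n:ℝ) * ((n-1).descFactorial m : ℝ) := by
      have h := Nat.succ_descFactorial_succ (n-1) m
      rw [Nat.sub_add_cancel hn1] at h
      exact_mod_cast h
    rw [h1, ← fdiff_succ_comm]
    rw [h2]
    ring

/-! ## Real finite differences -/

def rd : ℕ → (ℝ → ℝ) → ℝ → ℝ → ℝ
  | 0, φ, _, t => φ t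
  | k + 1, φ, h, t => rd k φ h (t + h) - rd k φ h t

lemma rd_continuousOn (k : ℕ) (φ : ℝ → ℝ) (hφ : ContinuousOn φ (Set.Icc 0 1))
    (h : ℝ) (hh : 0 ≤ h) :
    ContinuousOn (rd k φ h) {t : ℝ | 0 ≤ t ∧ t + k * h ≤ 1} := by
  induction k with
  | zero =>
    refine hφ.mono ?_
    intro t ht
    simp only [Nat.cast_zero, zero_mul, add_zero, Set.mem_setOf_eq] at ht
    exact ⟨ht.1, ht.2⟩
  | succ k ih =>
    have h1 : ContinuousOn (fun t => rd k φ h (t + h)) {t : ℝ | 0 ≤ t ∧ t + (k+1 : ℕ) * h ≤ 1} := by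
      apply ih.comp (continuous_add_right h).continuousOn
      intro t ht
      simp only [Set.mem_setOf_eq] at ht ⊢
      constructor
      · linarith [ht.1]
      · push_cast at ht ⊢; linarith [ht.2]
    have h2 : ContinuousOn (fun t => rd k φ h t) {t : ℝ | 0 ≤ t ∧ t + (k+1 : ℕ) * h ≤ 1} := by
      apply ih.mono
      intro t ht
      simp only [Set.mem_setOf_eq] at ht ⊢
      refine ⟨ht.1, ?_⟩
      have : (k : ℝ) * h ≤ (k+1 : ℕ) * h := by push_cast; nlinarith
      linarith [ht.2]
    exact h1.sub h2

lemma rd_hasDerivAt (k : ℕ) (φ φ' : ℝ → ℝ)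
    (hd : ∀ s ∈ Set.Ioo (0:ℝ) 1, HasDerivAt φ (φ' s) s) (h : ℝ) (hh : 0 ≤ h) :
    ∀ t, 0 < t → t + k * h < 1 → HasDerivAt (rd k φ h) (rd k φ' h t) t := by
  induction k with
  | zero =>
    intro t ht1 ht2
    simp only [Nat.cast_zero, zero_mul, add_zero] at ht2
    exact hd t ⟨ht1, ht2⟩
  | succ k ih =>
    intro t ht1 ht2
    push_cast at ht2
    have hA : HasDerivAt (fun s => rd k φ h (s + h)) (rd k φ' h (t + h)) t := by
      have := (ih (t + h) (by linarith) (by push_cast; linarith)).comp t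
        ((hasDerivAt_id t).add_const h)
      simpa [Function.comp_def] using this
    have hB : HasDerivAt (rd k φ h) (rd k φ' h t) t :=
      ih t ht1 (by push_cast; nlinarith)
    exact (hA.sub hB : _)

lemma udo01 : UniqueDiffOn ℝ (Set.Icc (0:ℝ) 1) := uniqueDiffOn_Icc (by norm_num)

section Analytic

variable (m : ℕ) (f : ℝ → ℝ) (hf : ContDiffOn ℝ m f (Set.Icc 0 1))
include hf



lemma Fcont (j : ℕ) (hj : j ≤ m) :
    ContinuousOn (iteratedDerivWithin j f (Set.Icc 0 1)) (Set.Icc 0 1) :=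
  hf.continuousOn_iteratedDerivWithin (by exact_mod_cast hj) udo01

lemma Fderiv (j : ℕ) (hj : j + 1 ≤ m) :
    ∀ t ∈ Set.Ioo (0:ℝ) 1, HasDerivAt (iteratedDerivWithin j f (Set.Icc 0 1))
      (iteratedDerivWithin (j+1) f (Set.Icc 0 1) t) t := by
  intro t ht
  have ht' : t ∈ Set.Icc (0:ℝ) 1 := Set.mem_Icc_of_Ioo ht
  have hd : DifferentiableWithinAt ℝ (iteratedDerivWithin j f (Set.Icc 0 1)) (Set.Icc 0 1) t :=
    (hf.differentiableOn_iteratedDerivWithin (by exact_mod_cast hj) udo01) t ht'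
  have hdw := hd.hasDerivWithinAt
  have hnhds : Set.Icc (0:ℝ) 1 ∈ nhds t := Icc_mem_nhds ht.1 ht.2
  have := hdw.hasDerivAt hnhds
  rwa [← iteratedDerivWithin_succ] at this

lemma rd_bound : ∀ k j : ℕ, j + k ≤ m → ∀ h : ℝ, 0 < h → ∀ t : ℝ, 0 ≤ t → t + k * h ≤ 1 →
    ∀ c B : ℝ, (∀ ξ ∈ Set.Icc t (t + k * h),
      |iteratedDerivWithin (j+k) f (Set.Icc 0 1) ξ - c| ≤ B) →
    |rd k (iteratedDerivWithin j f (Set.Icc 0 1)) h t - h ^ k * c| ≤ h ^ k * B := by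
  intro k
  induction k with
  | zero =>
    intro j hj h hh t ht1 ht2 c B hB
    have := hB t (by constructor <;> simp [ht1])
    simpa [rd] using this
  | succ k ih =>
    intro j hj h hh t ht1 ht2 c B hB
    push_cast at ht2
    set F : ℕ → ℝ → ℝ := fun j => iteratedDerivWithin j f (Set.Icc 0 1) with hF
    have hjk : j + 1 + k ≤ m := by omega
    have hsub : Set.Icc t (t + h) ⊆ {s : ℝ | 0 ≤ s ∧ s + (k:ℝ) * h ≤ 1} := by
      intro s hs
      simp only [Set.mem_setOf_eq]
      exact ⟨le_trans ht1 hs.1, by nlinarith [hs.2]⟩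
    have hcont : ContinuousOn (rd k (F j) h) (Set.Icc t (t + h)) :=
      (rd_continuousOn k (F j) (Fcont m f hf j (by omega)) h hh.le).mono hsub
    have hderiv : ∀ s ∈ Set.Ioo t (t + h),
        HasDerivWithinAt (rd k (F j) h) (rd k (F (j+1)) h s) (Set.Ioi s) s := by
      intro s hs
      exact (rd_hasDerivAt k (F j) (F (j+1)) (Fderiv m f hf j (by omega))
        h hh.le s (lt_of_le_of_lt ht1 hs.1) (by nlinarith [hs.2])).hasDerivWithinAt
    have hint : IntervalIntegrable (rd k (F (j+1)) h) MeasureTheory.volume t (t + h) := by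
      apply ContinuousOn.intervalIntegrable
      have huicc : Set.uIcc t (t+h) = Set.Icc t (t+h) := Set.uIcc_of_le (by linarith)
      rw [huicc]
      exact (rd_continuousOn k (F (j+1)) (Fcont m f hf (j+1) (by omega)) h hh.le).mono hsub
    have hftc := intervalIntegral.integral_eq_sub_of_hasDeriv_right_of_le (by linarith)
      hcont hderiv hint
    have hrec : rd (k+1) (F j) h t = ∫ s in t..(t+h), rd k (F (j+1)) h s := by
      rw [hftc]; rfl
    have hidx : j + (k+1) = (j+1) + k := by omega
    rw [hidx] at hB
    have hbound : ∀ s ∈ Set.uIoc t (t+h), ‖rd k (F (j+1)) h s - h ^ k * c‖ ≤ h ^ k * B := by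
      intro s hs
      rw [Set.uIoc_of_le (by linarith)] at hs
      apply ih (j+1) (by omega) h hh s (by linarith [hs.1]) (by nlinarith [hs.2])
      intro ξ hξ
      apply hB ξ
      constructor
      · linarith [hξ.1, hs.1.le]
      · push_cast
        nlinarith [hξ.2, hs.2]
    have key : rd (k+1) (F j) h t - h^(k+1) * c
        = ∫ s in t..(t+h), (rd k (F (j+1)) h s - h ^ k * c) := by
      rw [intervalIntegral.integral_sub hint intervalIntegrable_const, ← hrec,
        intervalIntegral.integral_const]
      simp
      ring
    calc |rd (k+1) (F j) h t - h^(k+1) * c|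
        = ‖∫ s in t..(t+h), (rd k (F (j+1)) h s - h^k*c)‖ := by rw [key]; rfl
      _ ≤ (h^k * B) * |t + h - t| := intervalIntegral.norm_integral_le_of_norm_le_const hbound
      _ = h^(k+1) * B := by
          rw [show t + h - t = h by ring, abs_of_nonneg hh.le]; ring
end Analytic

lemma fdiff_eq_rd (φ : ℝ → ℝ) (n : ℕ) (hn : 1 ≤ n) :
    ∀ k i : ℕ, fdiff k (fun j : ℕ => φ ((j:ℝ)/n)) i = rd k φ (1/(n:ℝ)) ((i:ℝ)/n) := by
  have hn' : (n:ℝ) ≠ 0 := by positivity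
  intro k
  induction k with
  | zero => intro i; rfl
  | succ k ih =>
    intro i
    show fdiff k _ (i+1) - fdiff k _ i = rd k φ (1/(n:ℝ)) ((i:ℝ)/n + 1/n) - rd k φ (1/(n:ℝ)) ((i:ℝ)/n)
    rw [ih, ih]
    congr 1
    push_cast
    field_simp

lemma descFac_bounds (n : ℕ) (hn : 1 ≤ n) :
    ∀ m : ℕ, m ≤ n → 1 - (m:ℝ)^2/n ≤ (n.descFactorial m : ℝ)/(n:ℝ)^m ∧
      (n.descFactorial m : ℝ)/(n:ℝ)^m ≤ 1 := by
  have hn0 : (0:ℝ) < n := by exact_mod_cast hn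
  intro m
  induction m with
  | zero => intro _; norm_num
  | succ m ih =>
    intro hm1
    obtain ⟨l, u⟩ := ih (by omega)
    have hcast : (n.descFactorial (m+1) : ℝ) = ((n:ℝ) - m) * (n.descFactorial m : ℝ) := by
      rw [Nat.descFactorial_succ]
      push_cast [Nat.cast_sub (by omega : m ≤ n)]
      ring
    have hfrac : (n.descFactorial (m+1) : ℝ)/(n:ℝ)^(m+1)
        = ((n.descFactorial m : ℝ)/(n:ℝ)^m) * (1 - (m:ℝ)/n) := by
      rw [hcast, pow_succ]
      field_simp
    have hd0 : (0:ℝ) ≤ (n.descFactorial m : ℝ)/(n:ℝ)^m := by positivity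
    have hm_le : (m:ℝ)/n ≤ 1 := by
      rw [div_le_one hn0]; exact_mod_cast (by omega : m ≤ n)
    have hm_nn : (0:ℝ) ≤ (m:ℝ)/n := by positivity
    constructor
    · rw [hfrac]
      push_cast
      have e1 : (1 - (m:ℝ)^2/n) * (1 - (m:ℝ)/n) ≤ (n.descFactorial m : ℝ)/(n:ℝ)^m * (1 - (m:ℝ)/n) :=
        mul_le_mul_of_nonneg_right l (by linarith)
      have e2 : (0:ℝ) ≤ (1 - (m:ℝ)^2/n) * (1 - (m:ℝ)/n) - (1 - ((m:ℝ)+1)^2/n) := by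
        have h : (1 - (m:ℝ)^2/n) * (1 - (m:ℝ)/n) - (1 - ((m:ℝ)+1)^2/n)
            = ((m:ℝ)^3 + ((m:ℝ)+1)*n) / (n:ℝ)^2 := by field_simp; ring
        rw [h]; positivity
      linarith
    · rw [hfrac]
      nlinarith

lemma sum_b_one (N : ℕ) (x : ℝ) (hx : x ∈ Set.Icc (0:ℝ) 1) :
    ∑ i ∈ Finset.range (N+1), (N.choose i : ℝ) * x^i * (1-x)^(N-i) = 1 := by
  have hp := bernstein.probability N ⟨x, hx⟩
  rw [← Fin.sum_univ_eq_sum_range (fun i => (N.choose i : ℝ) * x^i * (1-x)^(N-i)) (N+1)]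
  refine Eq.trans ?_ hp
  apply Finset.sum_congr rfl
  intro k _
  simp [bernstein_apply]

lemma sum_b_var (N : ℕ) (hN : 0 < N) (x : ℝ) (hx : x ∈ Set.Icc (0:ℝ) 1) :
    ∑ i ∈ Finset.range (N+1), (x - (i:ℝ)/N)^2 * ((N.choose i : ℝ) * x^i * (1-x)^(N-i))
      = x * (1-x) / N := by
  have hN' : (0:ℝ) < N := by exact_mod_cast hN
  have hv := bernstein.variance hN.ne' ⟨x, hx⟩
  rw [← Fin.sum_univ_eq_sum_range
    (fun i => (x - (i:ℝ)/N)^2 * ((N.choose i : ℝ) * x^i * (1-x)^(N-i))) (N+1)]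
  refine Eq.trans ?_ hv
  apply Finset.sum_congr rfl
  intro k _
  simp [bernstein_apply, bernstein.z]

set_option maxHeartbeats 1000000 in
theorem derivB_conv (m : ℕ) (f : ℝ → ℝ) (hf : ContDiffOn ℝ m f (Set.Icc 0 1)) (hm : 1 ≤ m) :
    ∀ ε > 0, ∀ᶠ n : ℕ in Filter.atTop, ∀ x ∈ Set.Icc (0:ℝ) 1,
    |iteratedDeriv m (bern n f) x - iteratedDerivWithin m f (Set.Icc 0 1) x| ≤ ε := by
  set F : ℝ → ℝ := iteratedDerivWithin m f (Set.Icc 0 1) with hFdef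
  have hFc : ContinuousOn F (Set.Icc 0 1) := Fcont m f hf m le_rfl
  obtain ⟨M0, hM0⟩ := isCompact_Icc.exists_bound_of_continuousOn hFc
  set M : ℝ := max M0 1 with hMdef
  have hM1 : (1:ℝ) ≤ M := le_max_right _ _
  have hM0' : (0:ℝ) < M := lt_of_lt_of_le one_pos hM1
  have hM : ∀ ξ ∈ Set.Icc (0:ℝ) 1, |F ξ| ≤ M := by
    intro ξ hξ
    exact le_trans (hM0 ξ hξ) (le_max_left _ _)
  intro ε hε
  set ε3 : ℝ := ε/3 with hε3def
  have hε3 : 0 < ε3 := by positivity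
  have hUC := isCompact_Icc.uniformContinuousOn_of_continuous hFc
  rw [Metric.uniformContinuousOn_iff] at hUC
  obtain ⟨δ, hδ, hδ'⟩ := hUC ε3 hε3
  obtain ⟨N1, hN1⟩ := exists_nat_gt ((m:ℝ)^2 * M / ε3)
  obtain ⟨N2, hN2⟩ := exists_nat_gt (2*(m:ℝ)/δ)
  obtain ⟨N3, hN3⟩ := exists_nat_gt (2*M/(δ^2*ε3))
  filter_upwards [Filter.eventually_ge_atTop (2*m + N1 + N2 + N3 + 1)] with n hn
  intro x hx
  have hx0 : (0:ℝ) ≤ x := hx.1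
  have hx1 : x ≤ 1 := hx.2
  have hnm : m ≤ n := by omega
  have hn1 : 1 ≤ n := by omega
  set NN : ℕ := n - m with hNNdef
  have hNN1 : 1 ≤ NN := by omega
  have hNN0 : (0:ℝ) < NN := by exact_mod_cast hNN1
  have hnR : (0:ℝ) < n := by exact_mod_cast hn1
  have hcast : (n:ℝ) = (NN:ℝ) + m := by
    rw [hNNdef]; push_cast [Nat.cast_sub hnm]; ring
  have hb : (m:ℝ)^2 * M / n ≤ ε3 := by
    have h1 : (m:ℝ)^2 * M / ε3 < n := lt_of_lt_of_le hN1 (by exact_mod_cast (by omega : N1 ≤ n))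
    rw [div_lt_iff₀ hε3] at h1
    rw [div_le_iff₀ hnR]
    linarith [h1, (by ring : (n:ℝ) * ε3 = ε3 * (n:ℝ))]
  have hc : (m:ℝ)/n ≤ δ/2 := by
    have h1 : 2*(m:ℝ)/δ < n := lt_of_lt_of_le hN2 (by exact_mod_cast (by omega : N2 ≤ n))
    rw [div_lt_iff₀ hδ] at h1
    rw [div_le_div_iff₀ hnR (by norm_num : (0:ℝ) < 2)]
    linarith [h1, (by ring : (n:ℝ) * δ = δ * (n:ℝ))]
  have hd : 2*M/(δ^2 * NN) ≤ ε3 := by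
    have h1 : 2*M/(δ^2*ε3) < NN := by
      have : (N3:ℝ) ≤ NN := by exact_mod_cast (by omega : N3 ≤ NN)
      linarith
    rw [div_lt_iff₀ (by positivity)] at h1
    rw [div_le_iff₀ (by positivity)]
    linarith [h1, (by ring : (NN:ℝ) * (δ^2*ε3) = ε3 * (δ^2 * (NN:ℝ)))]
  set g : ℕ → ℝ := fun i => f ((i:ℝ)/n) with hgdef
  set hh : ℝ := 1/(n:ℝ) with hhdef
  have hh0 : 0 < hh := by positivity
  set dfac : ℝ := (n.descFactorial m : ℝ) with hdfacdef
  have hdfac0 : 0 ≤ dfac := by rw [hdfacdef]; positivity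
  set r : ℝ := dfac * hh^m with hrdef
  have hr_eq : r = dfac / (n:ℝ)^m := by
    rw [hrdef, hhdef, div_pow, one_pow, div_eq_mul_inv, div_eq_mul_inv]
    ring
  obtain ⟨hrlow, hrup⟩ := descFac_bounds n hn1 m hnm
  rw [← hr_eq] at hrlow hrup
  have hr0 : 0 ≤ r := by rw [hr_eq]; positivity
  set b : ℕ → ℝ := fun i => (NN.choose i : ℝ) * x^i * (1-x)^(NN-i) with hbdef
  have hb_nn : ∀ i, 0 ≤ b i := by
    intro i
    rw [hbdef]
    have : (0:ℝ) ≤ 1 - x := by linarith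
    positivity
  have hb_sum : ∑ i ∈ Finset.range (NN+1), b i = 1 := sum_b_one NN x hx
  have hvar : ∑ i ∈ Finset.range (NN+1), (x - (i:ℝ)/NN)^2 * b i = x * (1-x) / NN :=
    sum_b_var NN hNN1 x hx
  have hiter : iteratedDeriv m (bern n f) x = dfac * Bg NN (fdiff m g) x := by
    have hbern : bern n f = Bg n g := rfl
    rw [hbern, iteratedDeriv_Bg m n hnm g]
  -- pointwise estimate
  have hpt : ∀ i ∈ Finset.range (NN+1),
      |dfac * fdiff m g i - F x| ≤ 2*ε3 + (8*M/δ^2) * (x - (i:ℝ)/NN)^2 := by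
    intro i hi
    rw [Finset.mem_range] at hi
    have hiNN : i ≤ NN := by omega
    have hiR : (i:ℝ) ≤ NN := by exact_mod_cast hiNN
    have hi0 : (0:ℝ) ≤ i := by positivity
    set t : ℝ := (i:ℝ)/n with htdef
    have ht0 : 0 ≤ t := by positivity
    have htmh : t + (m:ℝ) * hh = ((i:ℝ) + m)/n := by
      rw [htdef, hhdef]; field_simp
    have htm : t + (m:ℝ) * hh ≤ 1 := by
      rw [htmh, div_le_one hnR, hcast]; linarith
    set Bi : ℝ := ε3 + (8*M/δ^2) * (x - (i:ℝ)/NN)^2 with hBidef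
    have hBi0 : 0 ≤ Bi := by
      rw [hBidef]
      have : (0:ℝ) ≤ (8*M/δ^2) * (x - (i:ℝ)/NN)^2 := by positivity
      linarith
    have hde : (i:ℝ)/NN - (i:ℝ)/n = ((i:ℝ)*m)/((NN:ℝ)*n) := by
      field_simp
      rw [hcast]; ring
    have hd0 : 0 ≤ (i:ℝ)/NN - (i:ℝ)/n := by rw [hde]; positivity
    have hd1 : (i:ℝ)/NN - (i:ℝ)/n ≤ (m:ℝ)/n := by
      rw [hde, div_le_div_iff₀ (by positivity) hnR]
      have h6 := mul_le_mul_of_nonneg_right hiR (by positivity : (0:ℝ) ≤ (m:ℝ)*n)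
      linarith [h6, (by ring : (i:ℝ)*((m:ℝ)*(n:ℝ)) = (i:ℝ)*(m:ℝ)*(n:ℝ)),
        (by ring : (NN:ℝ)*((m:ℝ)*(n:ℝ)) = (m:ℝ)*((NN:ℝ)*(n:ℝ)))]
    have hgrid : ∀ ξ ∈ Set.Icc t (t + (m:ℝ)*hh), |ξ - (i:ℝ)/NN| ≤ δ/2 := by
      intro ξ hξ
      have h1 : t ≤ ξ := hξ.1
      have h2 : ξ ≤ t + (m:ℝ)*hh := hξ.2
      have h3 : (m:ℝ)*hh = (m:ℝ)/n := by rw [hhdef]; ring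
      rw [abs_le]
      rw [htdef] at h1
      rw [htdef, h3] at h2
      constructor
      · linarith [hd0, hd1, hc]
      · linarith [hd0, hd1, hc]
    have hFB : ∀ ξ ∈ Set.Icc t (t + (m:ℝ)*hh), |F ξ - F x| ≤ Bi := by
      intro ξ hξ
      have hξ01 : ξ ∈ Set.Icc (0:ℝ) 1 := ⟨le_trans ht0 hξ.1, le_trans hξ.2 htm⟩
      by_cases hcase : |ξ - x| < δ
      · have hdist := hδ' ξ hξ01 x hx (by rwa [Real.dist_eq])
        rw [Real.dist_eq] at hdist
        have h2 : 0 ≤ (8*M/δ^2) * (x - (i:ℝ)/NN)^2 := by positivity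
        rw [hBidef]; linarith
      · push_neg at hcase
        have h1 := hgrid ξ hξ
        have h2 : δ/2 ≤ |x - (i:ℝ)/NN| := by
          have h3 : |ξ - x| ≤ |ξ - (i:ℝ)/NN| + |(i:ℝ)/NN - x| := abs_sub_le ξ ((i:ℝ)/NN) x
          rw [abs_sub_comm ((i:ℝ)/NN) x] at h3
          linarith
        have h4 : (δ/2)^2 ≤ (x - (i:ℝ)/NN)^2 := by
          have h4a := mul_self_le_mul_self (by positivity : (0:ℝ) ≤ δ/2) h2
          rw [abs_mul_abs_self] at h4a
          rw [sq, sq]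
          exact h4a
        have h5 : 2*M ≤ (8*M/δ^2) * (x - (i:ℝ)/NN)^2 := by
          have h6 := mul_le_mul_of_nonneg_left h4 (by positivity : (0:ℝ) ≤ 8*M/δ^2)
          have h7 : (8*M/δ^2) * (δ/2)^2 = 2*M := by field_simp; ring
          linarith
        have h8 : |F ξ - F x| ≤ 2*M := by
          have h9 := abs_add_le (F ξ) (-(F x))
          rw [abs_neg] at h9
          have h10 : F ξ - F x = F ξ + -(F x) := by ring
          rw [h10]
          have := hM ξ hξ01
          have := hM x hx
          linarith
        rw [hBidef]; linarith
    have hfd : fdiff m g i = rd m f hh t := by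
      rw [hgdef, hhdef, htdef]
      exact fdiff_eq_rd f n hn1 m i
    have hrd := rd_bound m f hf m 0 (by omega) hh hh0 t ht0 htm (F x) Bi
      (by intro ξ hξ; rw [Nat.zero_add]; exact hFB ξ hξ)
    rw [iteratedDerivWithin_zero, ← hfd] at hrd
    -- combine
    have e1 : |dfac * (fdiff m g i - hh^m * F x)| ≤ r * Bi := by
      rw [abs_mul, abs_of_nonneg hdfac0]
      calc dfac * |fdiff m g i - hh^m * F x| ≤ dfac * (hh^m * Bi) :=
            mul_le_mul_of_nonneg_left hrd hdfac0
        _ = r * Bi := by rw [hrdef]; ring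
    have e2 : |(r - 1) * F x| ≤ (1 - r) * M := by
      rw [abs_mul, abs_of_nonpos (by linarith : r - 1 ≤ 0)]
      have h1 : 0 ≤ 1 - r := by linarith
      have h2 : -(r - 1) = 1 - r := by ring
      rw [h2]
      exact mul_le_mul_of_nonneg_left (hM x hx) h1
    have e3 : (1 - r) * M ≤ ε3 := by
      have h1 : 1 - r ≤ (m:ℝ)^2/n := by linarith
      calc (1 - r) * M ≤ ((m:ℝ)^2/n) * M := mul_le_mul_of_nonneg_right h1 hM0'.le
        _ = (m:ℝ)^2 * M / n := by ring
        _ ≤ ε3 := hb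
    have e4 : r * Bi ≤ Bi := by
      calc r * Bi ≤ 1 * Bi := mul_le_mul_of_nonneg_right hrup hBi0
        _ = Bi := one_mul _
    calc |dfac * fdiff m g i - F x|
        = |dfac * (fdiff m g i - hh^m * F x) + (r - 1) * F x| := by
          rw [hrdef]; ring_nf
      _ ≤ |dfac * (fdiff m g i - hh^m * F x)| + |(r - 1) * F x| := abs_add_le _ _
      _ ≤ r * Bi + (1 - r) * M := add_le_add e1 e2
      _ ≤ Bi + ε3 := add_le_add e4 e3
      _ = 2*ε3 + (8*M/δ^2) * (x - (i:ℝ)/NN)^2 := by rw [hBidef]; ring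
  -- sum up
  have hDsum : iteratedDeriv m (bern n f) x - F x
      = ∑ i ∈ Finset.range (NN+1), b i * (dfac * fdiff m g i - F x) := by
    rw [hiter]
    have h1 : ∑ i ∈ Finset.range (NN+1), b i * (dfac * fdiff m g i - F x)
        = dfac * (∑ i ∈ Finset.range (NN+1),
            (NN.choose i : ℝ) * fdiff m g i * x^i * (1-x)^(NN-i))
          - (∑ i ∈ Finset.range (NN+1), b i) * F x := by
      rw [Finset.mul_sum, Finset.sum_mul, ← Finset.sum_sub_distrib]
      apply Finset.sum_congr rfl
      intro i _
      rw [hbdef]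
      ring
    rw [h1, hb_sum, one_mul]
    unfold Bg
    rfl
  calc |iteratedDeriv m (bern n f) x - F x|
      = |∑ i ∈ Finset.range (NN+1), b i * (dfac * fdiff m g i - F x)| := by rw [hDsum]
    _ ≤ ∑ i ∈ Finset.range (NN+1), |b i * (dfac * fdiff m g i - F x)| :=
        Finset.abs_sum_le_sum_abs _ _
    _ ≤ ∑ i ∈ Finset.range (NN+1), b i * (2*ε3 + (8*M/δ^2) * (x - (i:ℝ)/NN)^2) := by
        apply Finset.sum_le_sum
        intro i hi
        rw [abs_mul, abs_of_nonneg (hb_nn i)]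
        exact mul_le_mul_of_nonneg_left (hpt i hi) (hb_nn i)
    _ = 2*ε3 * (∑ i ∈ Finset.range (NN+1), b i)
        + (8*M/δ^2) * (∑ i ∈ Finset.range (NN+1), (x - (i:ℝ)/NN)^2 * b i) := by
        rw [Finset.mul_sum, Finset.mul_sum, ← Finset.sum_add_distrib]
        apply Finset.sum_congr rfl
        intro i _
        ring
    _ = 2*ε3 + (8*M/δ^2) * (x * (1-x) / NN) := by rw [hb_sum, hvar]; ring
    _ ≤ 2*ε3 + ε3 := by
        have hx14 : x * (1-x) ≤ 1/4 := by
          linarith [sq_nonneg (x - 1/2), (by ring : (x - 1/2)^2 = x^2 - x + 1/4),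
            (by ring : x * (1-x) = x - x^2)]
        have h1 : (8*M/δ^2) * (x * (1-x) / NN) ≤ (8*M/δ^2) * ((1/4) / NN) := by
          gcongr
        have h2 : (8*M/δ^2) * ((1/4) / (NN:ℝ)) = 2*M/(δ^2*NN) := by
          field_simp
          ring
        linarith
    _ = ε := by rw [hε3def]; ring

lemma itdw_eq (g : ℝ → ℝ) (hg : ContDiff ℝ ⊤ g) :
    ∀ k : ℕ, ∀ x ∈ Set.Icc (0:ℝ) 1,
      iteratedDerivWithin k g (Set.Icc 0 1) x = iteratedDeriv k g x := by
  intro k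
  induction k with
  | zero => intro x _; rw [iteratedDerivWithin_zero, iteratedDeriv_zero]
  | succ k ih =>
    intro x hx
    rw [iteratedDerivWithin_succ]
    rw [derivWithin_congr (fun y hy => ih y hy) (ih x hx)]
    rw [DifferentiableAt.derivWithin
      ((hg.differentiable_iteratedDeriv k (by simp)).differentiableAt)
      (udo01 x hx)]
    rw [iteratedDeriv_succ]

theorem caputo_bernstein_aux (m : ℕ) (hm : 1 ≤ m) (α : ℝ)
    (hα₁ : (m : ℝ) - 1 ≤ α) (hα₂ : α < m)
    (f : ℝ → ℝ) (hf : ContDiffOn ℝ m f (Set.Icc 0 1)) :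
    TendstoUniformlyOn
      (fun n x => (1 / Real.Gamma ((m : ℝ) - α)) *
        ∫ τ in (0:ℝ)..x, (x - τ) ^ ((m:ℝ) - α - 1) *
          iteratedDerivWithin m (bern n f) (Set.Icc 0 1) τ)
      (fun x => (1 / Real.Gamma ((m : ℝ) - α)) *
        ∫ τ in (0:ℝ)..x, (x - τ) ^ ((m:ℝ) - α - 1) *
          iteratedDerivWithin m f (Set.Icc 0 1) τ)
      Filter.atTop (Set.Icc 0 1) := by
  set β : ℝ := (m:ℝ) - α with hβdef
  have hβ0 : 0 < β := by rw [hβdef]; linarith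
  have hβ1 : β ≤ 1 := by rw [hβdef]; linarith
  have hΓ : 0 < Real.Gamma β := Real.Gamma_pos_of_pos hβ0
  have hFc : ContinuousOn (iteratedDerivWithin m f (Set.Icc 0 1)) (Set.Icc 0 1) :=
    Fcont m f hf m le_rfl
  rw [Metric.tendstoUniformlyOn_iff]
  intro ε hε
  set ε' : ℝ := ε * β * Real.Gamma β / 2 with hε'def
  have hε'0 : 0 < ε' := by rw [hε'def]; positivity
  filter_upwards [derivB_conv m f hf hm ε' hε'0] with n hn
  intro x hx
  have hx0 : (0:ℝ) ≤ x := hx.1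
  have hx1 : x ≤ 1 := hx.2
  set Ff : ℝ → ℝ := iteratedDerivWithin m f (Set.Icc 0 1) with hFfdef
  set Fb : ℝ → ℝ := iteratedDerivWithin m (bern n f) (Set.Icc 0 1) with hFbdef
  have hbernCD : ContDiff ℝ ⊤ (bern n f) :=
    contDiff_Bg n (fun i => f ((i:ℝ)/n))
  have hFbc : ContinuousOn Fb (Set.Icc 0 1) :=
    Fcont m (bern n f) (hbernCD.contDiffOn.of_le le_top) m le_rfl
  have huIcc : Set.uIcc (0:ℝ) x = Set.Icc 0 x := Set.uIcc_of_le hx0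
  have hsub : Set.Icc (0:ℝ) x ⊆ Set.Icc 0 1 := Set.Icc_subset_Icc le_rfl hx1
  have hker : IntervalIntegrable (fun τ => (x - τ) ^ (β - 1)) MeasureTheory.volume 0 x := by
    have h1 : IntervalIntegrable (fun u : ℝ => u ^ (β - 1)) MeasureTheory.volume 0 x :=
      intervalIntegral.intervalIntegrable_rpow' (by linarith)
    have h2 := (h1.comp_sub_left x).symm
    simpa using h2
  have hker_nn : ∀ τ ∈ Set.Icc (0:ℝ) x, 0 ≤ (x - τ) ^ (β - 1) := by
    intro τ hτ
    exact Real.rpow_nonneg (by linarith [hτ.2]) _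
  have hIf : IntervalIntegrable (fun τ => (x - τ) ^ (β - 1) * Ff τ) MeasureTheory.volume 0 x :=
    hker.mul_continuousOn (by rw [huIcc]; exact hFc.mono hsub)
  have hIb : IntervalIntegrable (fun τ => (x - τ) ^ (β - 1) * Fb τ) MeasureTheory.volume 0 x :=
    hker.mul_continuousOn (by rw [huIcc]; exact hFbc.mono hsub)
  have hIg : IntervalIntegrable (fun τ => (x - τ) ^ (β - 1) * ε') MeasureTheory.volume 0 x :=
    hker.mul_const _
  rw [Real.dist_eq]
  have hdiff : (1 / Real.Gamma β) * (∫ τ in (0:ℝ)..x, (x - τ) ^ (β - 1) * Ff τ)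
      - (1 / Real.Gamma β) * (∫ τ in (0:ℝ)..x, (x - τ) ^ (β - 1) * Fb τ)
      = (1 / Real.Gamma β) * ∫ τ in (0:ℝ)..x, (x - τ) ^ (β - 1) * (Ff τ - Fb τ) := by
    rw [← mul_sub, ← intervalIntegral.integral_sub hIf hIb]
    congr 1
    apply intervalIntegral.integral_congr
    intro τ _
    ring
  have hptw : ∀ τ ∈ Set.Icc (0:ℝ) x,
      |(x - τ) ^ (β - 1) * (Ff τ - Fb τ)| ≤ (x - τ) ^ (β - 1) * ε' := by
    intro τ hτ
    have hτ01 : τ ∈ Set.Icc (0:ℝ) 1 := hsub hτ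
    have hd : |Ff τ - Fb τ| ≤ ε' := by
      have h1 := hn τ hτ01
      have h2 : Fb τ = iteratedDeriv m (bern n f) τ := itdw_eq (bern n f) hbernCD m τ hτ01
      rw [h2, abs_sub_comm]
      exact h1
    rw [abs_mul, abs_of_nonneg (hker_nn τ hτ)]
    exact mul_le_mul_of_nonneg_left hd (hker_nn τ hτ)
  have hfun : (fun τ => (x - τ) ^ (β - 1) * (Ff τ - Fb τ))
      = (fun τ => (x - τ) ^ (β - 1) * Ff τ - (x - τ) ^ (β - 1) * Fb τ) := by
    funext τ; ring
  have hIsub : IntervalIntegrable (fun τ => (x - τ) ^ (β - 1) * (Ff τ - Fb τ))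
      MeasureTheory.volume 0 x := by
    rw [hfun]; exact hIf.sub hIb
  have hub : |∫ τ in (0:ℝ)..x, (x - τ) ^ (β - 1) * (Ff τ - Fb τ)| ≤ ε' / β := by
    have h1 : |∫ τ in (0:ℝ)..x, (x - τ) ^ (β - 1) * (Ff τ - Fb τ)|
        ≤ ∫ τ in (0:ℝ)..x, |(x - τ) ^ (β - 1) * (Ff τ - Fb τ)| := by
      exact intervalIntegral.abs_integral_le_integral_abs hx0
    have h2 : (∫ τ in (0:ℝ)..x, |(x - τ) ^ (β - 1) * (Ff τ - Fb τ)|)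
        ≤ ∫ τ in (0:ℝ)..x, (x - τ) ^ (β - 1) * ε' :=
      intervalIntegral.integral_mono_on hx0 hIsub.abs hIg hptw
    have h3 : (∫ τ in (0:ℝ)..x, (x - τ) ^ (β - 1) * ε')
        = (∫ τ in (0:ℝ)..x, (x - τ) ^ (β - 1)) * ε' := by
      exact intervalIntegral.integral_mul_const _ _
    have h4 : (∫ τ in (0:ℝ)..x, (x - τ) ^ (β - 1)) = x ^ β / β := by
      have h5 := intervalIntegral.integral_comp_sub_left (a := (0:ℝ)) (b := x)
        (fun u : ℝ => u ^ (β - 1)) x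
      simp only [sub_zero, sub_self] at h5
      rw [h5]
      rw [integral_rpow (Or.inl (by linarith : (-1:ℝ) < β - 1))]
      rw [Real.zero_rpow (by linarith : β - 1 + 1 ≠ 0)]
      rw [show β - 1 + 1 = β by ring]
      ring
    have h6 : x ^ β ≤ 1 := Real.rpow_le_one hx0 hx1 hβ0.le
    have h7 : (x ^ β / β) * ε' ≤ (1/β) * ε' := by
      have h8 : x ^ β / β ≤ 1 / β := by gcongr
      exact mul_le_mul_of_nonneg_right h8 hε'0.le
    calc |∫ τ in (0:ℝ)..x, (x - τ) ^ (β - 1) * (Ff τ - Fb τ)|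
        ≤ (∫ τ in (0:ℝ)..x, (x - τ) ^ (β - 1)) * ε' := le_trans h1 (le_trans h2 (le_of_eq h3))
      _ = (x ^ β / β) * ε' := by rw [h4]
      _ ≤ (1/β) * ε' := h7
      _ = ε' / β := by ring
  calc |(1 / Real.Gamma β) * (∫ τ in (0:ℝ)..x, (x - τ) ^ (β - 1) * Ff τ)
      - (1 / Real.Gamma β) * (∫ τ in (0:ℝ)..x, (x - τ) ^ (β - 1) * Fb τ)|
      = (1 / Real.Gamma β) * |∫ τ in (0:ℝ)..x, (x - τ) ^ (β - 1) * (Ff τ - Fb τ)| := by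
        rw [hdiff, abs_mul, abs_of_pos (by positivity : (0:ℝ) < 1 / Real.Gamma β)]
    _ ≤ (1 / Real.Gamma β) * (ε' / β) :=
        mul_le_mul_of_nonneg_left hub (by positivity)
    _ = ε / 2 := by
        rw [hε'def]
        field_simp
    _ < ε := by linarith


/-- For `f ∈ Cᵐ[0,1]` and `m - 1 ≤ α < m`, the left Caputo fractional derivatives
of the Bernstein polynomials of `f` converge uniformly on `[0,1]` to the left
Caputo fractional derivative of `f`. -/
theorem caputo_bernstein_uniform_convergence (m : ℕ) (hm : 1 ≤ m) (α : ℝ)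
    (hα₁ : (m : ℝ) - 1 ≤ α) (hα₂ : α < m)
    (f : ℝ → ℝ) (hf : ContDiffOn ℝ m f (Set.Icc 0 1)) :
    TendstoUniformlyOn (fun n x => caputo m α (bern n f) x)
      (fun x => caputo m α f x) Filter.atTop (Set.Icc 0 1) := by
  have h := caputo_bernstein_aux m hm α hα₁ hα₂ f hf
  unfold caputo
  exact h
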